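/- arXiv:1210.6930 — 2 statements merged into one kernel-verified Lean document; each statement's English description precedes it below -/
import Mathlib

section
/- Let ω ∈ ℝ^{ℕ^n_{2t}} be a truncated moment sequence admitting a finitely atomic representing measure μ with |supp(μ)| ≤ N, where d_K ≥ 1 and t ≥ N·d_K. Then ω is flat: rank M_{t−d_K}(ω) = rank M_t(ω). -/
/-- The finite set of exponents `α ∈ ℕ^n` with `|α| ≤ t`. -/
noncomputable def degLE (n t : ℕ) : Finset (Fin n →₀ ℕ) :=
  ((Fintype.piFinset fun _ : Fin n => Finset.range (t + 1)).filter
    (fun f => ∑ j, f j ≤ t)).image (fun f => Finsupp.equivFunOnFinite.symm f)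

/-- The `s`-th moment matrix of a multisequence `ω`, indexed by monomials of
degree `≤ s`: `(M_s(ω))_{α,β} = ω_{α+β}`. -/
noncomputable def momMat (n s : ℕ) (ω : (Fin n →₀ ℕ) → ℝ) :
    Matrix (degLE n s) (degLE n s) ℝ :=
  Matrix.of fun a b => ω (a.1 + b.1)

lemma mem_degLE {n s : ℕ} (α : Fin n →₀ ℕ) : α ∈ degLE n s ↔ ∑ j, α j ≤ s := by
  constructor
  · intro h
    simp only [degLE, Finset.mem_image] at h
    obtain ⟨f, hf, rfl⟩ := h
    simp only [Finset.mem_filter] at hf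
    simpa using hf.2
  · intro h
    simp only [degLE, Finset.mem_image]
    refine ⟨α, ?_, Finsupp.equivFunOnFinite.symm_apply_apply α⟩
    rw [Finset.mem_filter]
    refine ⟨?_, h⟩
    rw [Fintype.mem_piFinset]
    intro j
    rw [Finset.mem_range, Nat.lt_succ_iff]
    exact le_trans (Finset.single_le_sum (f := fun j => α j)
      (fun _ _ => Nat.zero_le _) (Finset.mem_univ j)) h

/-- Linear independence of the truncated evaluation vectors at distinct points. -/
lemma linIndep_eval {n s : ℕ} (S : Finset (Fin n → ℝ)) (hcard : S.card ≤ s + 1) :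
    LinearIndependent ℝ
      (fun (p : S) (a : degLE n s) => ∏ j, (p : Fin n → ℝ) j ^ (a.1 j)) := by
  classical
  rw [Fintype.linearIndependent_iff]
  intro g hg
  -- key: the signed combination kills every polynomial of total degree ≤ s
  have key : ∀ P : MvPolynomial (Fin n) ℝ, P.totalDegree ≤ s →
      ∑ p : S, g p * MvPolynomial.eval (p : Fin n → ℝ) P = 0 := by
    intro P hP
    have : ∀ p : S, g p * MvPolynomial.eval (p : Fin n → ℝ) P
        = ∑ α ∈ P.support, P.coeff α * (g p * ∏ j, (p : Fin n → ℝ) j ^ α j) := by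
      intro p
      rw [MvPolynomial.eval_eq', Finset.mul_sum]
      refine Finset.sum_congr rfl fun α _ => by ring
    rw [Finset.sum_congr rfl fun p _ => this p, Finset.sum_comm]
    refine Finset.sum_eq_zero fun α hα => ?_
    rw [← Finset.mul_sum]
    have hαs : α ∈ degLE n s := by
      rw [mem_degLE]
      have := MvPolynomial.le_totalDegree hα
      rw [Finsupp.sum_fintype _ _ (fun _ => rfl)] at this
      exact this.trans hP
    have := congrFun hg ⟨α, hαs⟩
    rw [Finset.sum_apply] at this
    simp only [Pi.smul_apply, smul_eq_mul, Pi.zero_apply] at this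
    rw [this, mul_zero]
  intro p0
  -- separating coordinates
  have hsep : ∀ q : S, q ≠ p0 → ∃ j, (p0 : Fin n → ℝ) j ≠ (q : Fin n → ℝ) j := by
    intro q hq
    by_contra h
    push_neg at h
    exact hq (Subtype.ext (funext fun j => (h j).symm))
  choose d hd using hsep
  set T := (Finset.univ.erase p0 : Finset S) with hT
  set P : MvPolynomial (Fin n) ℝ :=
    ∏ q ∈ T.attach, (MvPolynomial.X (d q.1 (Finset.mem_erase.mp q.2).1)
      - MvPolynomial.C ((q.1 : Fin n → ℝ) (d q.1 (Finset.mem_erase.mp q.2).1))) with hPdef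
  have hdeg : P.totalDegree ≤ s := by
    refine le_trans (MvPolynomial.totalDegree_finset_prod _ _) ?_
    refine le_trans (Finset.sum_le_card_nsmul _ _ 1 ?_) ?_
    · intro q _
      rw [sub_eq_add_neg, ← map_neg]
      refine le_trans (MvPolynomial.totalDegree_add _ _) ?_
      simp [MvPolynomial.totalDegree_X, MvPolynomial.totalDegree_C]
    · simp only [smul_eq_mul, mul_one, Finset.card_attach]
      have : T.card ≤ S.card - 1 := by
        rw [hT, Finset.card_erase_of_mem (Finset.mem_univ p0), Finset.card_univ,
          Fintype.card_coe]
      omega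
  have heval := key P hdeg
  -- eval at p ≠ p0 is zero
  have hzero : ∀ p : S, p ≠ p0 → MvPolynomial.eval (p : Fin n → ℝ) P = 0 := by
    intro p hp
    rw [hPdef, MvPolynomial.eval_prod]
    have hpT : p ∈ T := Finset.mem_erase.mpr ⟨hp, Finset.mem_univ p⟩
    refine Finset.prod_eq_zero (Finset.mem_attach T ⟨p, hpT⟩) ?_
    simp
  have hne : MvPolynomial.eval (p0 : Fin n → ℝ) P ≠ 0 := by
    rw [hPdef, MvPolynomial.eval_prod]
    refine Finset.prod_ne_zero_iff.mpr fun q _ => ?_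
    simpa [sub_eq_zero] using hd q.1 (Finset.mem_erase.mp q.2).1
  rw [Finset.sum_eq_single p0 (fun p _ hp => by rw [hzero p hp, mul_zero])
    (fun h => absurd (Finset.mem_univ p0) h)] at heval
  exact (mul_eq_zero.mp heval).resolve_right hne

open Matrix in
lemma momMat_rank_eq {n N s t : ℕ} (hs : s ≤ t) (ω : (Fin n →₀ ℕ) → ℝ)
    (c : Fin N → ℝ) (u : Fin N → Fin n → ℝ) (hc : ∀ i, 0 ≤ c i)
    (hrep : ∀ α : Fin n →₀ ℕ, (∑ j, α j) ≤ 2 * t → ω α = ∑ i, c i * ∏ j, u i j ^ α j)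
    (hcard : ((Finset.univ.filter (fun i => c i ≠ 0)).image u).card ≤ s + 1) :
    (momMat n s ω).rank = ((Finset.univ.filter (fun i => c i ≠ 0)).image u).card := by
  classical
  set S := (Finset.univ.filter (fun i => c i ≠ 0)).image u with hS
  set A : Matrix (Fin N) (degLE n s) ℝ :=
    Matrix.of (fun i a => Real.sqrt (c i) * ∏ j, u i j ^ (a.1 j)) with hA
  have hM : momMat n s ω = A.transpose * A := by
    ext a b
    have hdega : ∑ j, a.1 j ≤ s := (mem_degLE a.1).mp a.2
    have hdegb : ∑ j, b.1 j ≤ s := (mem_degLE b.1).mp b.2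
    have hdeg : (∑ j, (a.1 + b.1) j) ≤ 2 * t := by
      simp only [Finsupp.add_apply, Finset.sum_add_distrib]
      omega
    simp only [momMat, Matrix.of_apply, Matrix.mul_apply, Matrix.transpose_apply, hA]
    rw [hrep _ hdeg]
    refine Finset.sum_congr rfl fun i _ => ?_
    have : ∏ j, u i j ^ ((a.1 + b.1) j) = (∏ j, u i j ^ a.1 j) * ∏ j, u i j ^ b.1 j := by
      rw [← Finset.prod_mul_distrib]
      exact Finset.prod_congr rfl fun j _ => by rw [Finsupp.add_apply, pow_add]
    rw [this]
    have hsq : Real.sqrt (c i) * Real.sqrt (c i) = c i := Real.mul_self_sqrt (hc i)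
    conv_lhs => rw [← hsq]
    ring
  rw [hM, Matrix.rank_transpose_mul_self, ← Matrix.rank_transpose,
    Matrix.rank_eq_finrank_span_cols, Matrix.col_transpose, Matrix.row_def]
  have hspan : Submodule.span ℝ (Set.range A)
      = Submodule.span ℝ (Set.range
        (fun (p : S) (a : degLE n s) => ∏ j, (p : Fin n → ℝ) j ^ (a.1 j))) := by
    apply le_antisymm <;> rw [Submodule.span_le]
    · rintro v ⟨i, rfl⟩
      by_cases hci : c i = 0
      · have : A i = 0 := by
          funext a
          simp [hA, hci]
        rw [this]
        exact Submodule.zero_mem _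
      · have hiS : u i ∈ S := Finset.mem_image.mpr
          ⟨i, Finset.mem_filter.mpr ⟨Finset.mem_univ i, hci⟩, rfl⟩
        have : A i = Real.sqrt (c i) •
            (fun (a : degLE n s) => ∏ j, u i j ^ (a.1 j)) := by
          funext a
          simp [hA]
        rw [this]
        exact Submodule.smul_mem _ _ (Submodule.subset_span ⟨⟨u i, hiS⟩, rfl⟩)
    · rintro v ⟨p, rfl⟩
      obtain ⟨i, hi, hui⟩ := Finset.mem_image.mp p.2
      have hci : c i ≠ 0 := (Finset.mem_filter.mp hi).2
      have hsne : Real.sqrt (c i) ≠ 0 := (Real.sqrt_ne_zero (hc i)).mpr hci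
      have : (fun (a : degLE n s) => ∏ j, (p : Fin n → ℝ) j ^ (a.1 j))
          = (Real.sqrt (c i))⁻¹ • A i := by
        funext a
        simp [hA, ← hui, inv_mul_cancel_left₀ hsne]
      show (fun (a : degLE n s) => ∏ j, (p : Fin n → ℝ) j ^ (a.1 j)) ∈
        Submodule.span ℝ (Set.range A)
      rw [this]
      exact Submodule.smul_mem _ _ (Submodule.subset_span ⟨i, rfl⟩)
  rw [hspan, finrank_span_eq_card (linIndep_eval S hcard), Fintype.card_coe]

/-- If `ω ∈ ℝ^{ℕ^n_{2t}}` admits a finitely atomic representing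
measure with at most `N` atoms, `d_K ≥ 1`, and `t ≥ N·d_K`, then `ω` is flat:
`rank M_{t-d_K}(ω) = rank M_t(ω)`. -/
theorem flat_of_finitely_atomic
    (n t N dK : ℕ) (hdK : 1 ≤ dK) (ht : N * dK ≤ t)
    (ω : (Fin n →₀ ℕ) → ℝ)
    (hrep : ∃ (c : Fin N → ℝ) (u : Fin N → (Fin n → ℝ)),
      (∀ i, 0 ≤ c i) ∧
      ∀ α : Fin n →₀ ℕ, (α.sum fun _ e => e) ≤ 2 * t →
        ω α = ∑ i, c i * ∏ j, u i j ^ α j) :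
    (momMat n (t - dK) ω).rank = (momMat n t ω).rank := by
  classical
  obtain ⟨c, u, hc, hrep⟩ := hrep
  have hrep' : ∀ α : Fin n →₀ ℕ, (∑ j, α j) ≤ 2 * t →
      ω α = ∑ i, c i * ∏ j, u i j ^ α j := by
    intro α hα
    refine hrep α ?_
    rw [Finsupp.sum_fintype _ _ (fun _ => rfl)]
    exact hα
  have hSN : ((Finset.univ.filter (fun i => c i ≠ 0)).image u).card ≤ N := by
    refine le_trans Finset.card_image_le ?_
    refine le_trans (Finset.card_filter_le _ _) ?_
    simp
  have hNt : N ≤ t - dK + 1 := by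
    rcases Nat.eq_zero_or_pos N with hN | hN
    · omega
    · obtain ⟨m, rfl⟩ := Nat.exists_eq_add_of_lt hN
      simp only [zero_add] at *
      have h1 : m * dK + dK ≤ t := by
        have : (m + 1) * dK = m * dK + dK := by ring
        omega
      have h2 : m ≤ m * dK := Nat.le_mul_of_pos_right m hdK
      omega
  have h1 := momMat_rank_eq (Nat.sub_le t dK) ω c u hc hrep' (by omega)
  have h2 := momMat_rank_eq (le_refl t) ω c u hc hrep' (by omega)
  rw [h1, h2]
end

section
/- A symmetric n×n real matrix C is completely positive if and only if the Q_n-truncated multisequence c = (C_{ij})_{i≤j}, viewed as indexed by {α ∈ ℕ^n : |α| = 2} via c_{e_i+e_j} = C_{ij}, admits a representing measure supported in the standard simplex Δ_n = {x ∈ ℝ^n_+ : x_1 + ··· + x_n = 1}. -/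
open MeasureTheory

theorem myIsCompact_convexHull {E : Type*} [NormedAddCommGroup E] [NormedSpace ℝ E]
    [FiniteDimensional ℝ E] {K : Set E} (hK : IsCompact K) :
    IsCompact (convexHull ℝ K) := by
  classical
  rcases K.eq_empty_or_nonempty with rfl | ⟨k0, hk0⟩
  · simp
  set N := Module.finrank ℝ E + 1 with hN
  set D : Set ((Fin N → ℝ) × (Fin N → E)) :=
    (stdSimplex ℝ (Fin N)) ×ˢ (Set.univ.pi fun _ => K) with hD
  have hDc : IsCompact D := (isCompact_stdSimplex ℝ _).prod (isCompact_univ_pi fun _ => hK)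
  set g : (Fin N → ℝ) × (Fin N → E) → E := fun p => ∑ k, p.1 k • p.2 k with hg
  have hgc : Continuous g := by
    apply continuous_finset_sum
    intro k _
    exact ((continuous_apply k).comp continuous_fst).smul
      ((continuous_apply k).comp continuous_snd)
  have himg : g '' D = convexHull ℝ K := by
    apply Set.Subset.antisymm
    · rintro - ⟨⟨w, y⟩, ⟨⟨hw0, hw1⟩, hy⟩, rfl⟩
      exact (convex_convexHull ℝ K).sum_mem (fun k _ => hw0 k) hw1
        (fun k _ => subset_convexHull ℝ K (hy k (Set.mem_univ k)))
    · intro x hx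
      obtain ⟨ι, hfin, z, w, hrange, hindep, hwpos, hwsum, hrep⟩ :=
        eq_pos_convex_span_of_mem_convexHull hx
      have hcard : Fintype.card ι ≤ N := by
        rcases isEmpty_or_nonempty ι with h | h
        · simp only [Fintype.card_eq_zero]; omega
        · have := hindep.finrank_vectorSpan_add_one
          have h2 : Module.finrank ℝ (vectorSpan ℝ (Set.range z)) ≤ Module.finrank ℝ E :=
            Submodule.finrank_le _
          omega
      obtain ⟨e⟩ : Nonempty (ι ↪ Fin N) := by
        apply Function.Embedding.nonempty_of_card_le
        simpa using hcard
      set w' : Fin N → ℝ := fun k => if h : ∃ i, e i = k then w h.choose else 0 with hw'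
      set y' : Fin N → E := fun k => if h : ∃ i, e i = k then z h.choose else k0 with hy'
      have hchoose : ∀ i : ι, (⟨i, rfl⟩ : ∃ i', e i' = e i).choose = i := by
        intro i
        exact e.injective (⟨i, rfl⟩ : ∃ i', e i' = e i).choose_spec
      have hwe : ∀ i : ι, w' (e i) = w i := by
        intro i
        simp only [hw', dif_pos (⟨i, rfl⟩ : ∃ i', e i' = e i)]
        rw [hchoose i]
      have hye : ∀ i : ι, y' (e i) = z i := by
        intro i
        simp only [hy', dif_pos (⟨i, rfl⟩ : ∃ i', e i' = e i)]
        rw [hchoose i]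
      refine ⟨(w', y'), ⟨⟨?_, ?_⟩, ?_⟩, ?_⟩
      · intro k
        by_cases h : ∃ i, e i = k
        · simp only [hw', dif_pos h]; exact (hwpos _).le
        · simp only [hw', dif_neg h]; exact le_refl 0
      · have : (∑ k, w' k) = ∑ i, w i := by
          rw [← Finset.sum_subset (Finset.subset_univ (Finset.univ.map e))]
          · rw [Finset.sum_map]
            exact Finset.sum_congr rfl fun i _ => hwe i
          · intro k _ hk
            have h : ¬∃ i, e i = k := fun ⟨i, hi⟩ =>
              hk (Finset.mem_map.mpr ⟨i, Finset.mem_univ i, hi⟩)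
            simp only [hw', dif_neg h]
        rw [this, hwsum]
      · intro k _
        by_cases h : ∃ i, e i = k
        · simp only [hy', dif_pos h]
          exact hrange (Set.mem_range_self _)
        · simp only [hy', dif_neg h]; exact hk0
      · show (∑ k, w' k • y' k) = x
        rw [← hrep]
        rw [← Finset.sum_subset (Finset.subset_univ (Finset.univ.map e))]
        · rw [Finset.sum_map]
          exact Finset.sum_congr rfl fun i _ => by rw [hwe, hye]
        · intro k _ hk
          have h : ¬∃ i, e i = k := fun ⟨i, hi⟩ =>
            hk (Finset.mem_map.mpr ⟨i, Finset.mem_univ i, hi⟩)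
          simp only [hw', dif_neg h, zero_smul]
  rw [← himg]
  exact hDc.image hgc

/-- A symmetric `n×n` real matrix `C` is completely positive iff
the `Q_n`-truncated multisequence `c_{e_i+e_j} = C_{ij}` admits a representing
measure supported in the standard simplex `Δ_n`. -/
theorem completelyPositive_iff_simplex_measure
    (n : ℕ) (C : Matrix (Fin n) (Fin n) ℝ) (hC : C.IsSymm) :
    (∃ (r : ℕ) (u : Fin r → (Fin n → ℝ)),
      (∀ k i, 0 ≤ u k i) ∧ ∀ i j, C i j = ∑ k, u k i * u k j) ↔
    (∃ μ : Measure (Fin n → ℝ),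
      μ {x : Fin n → ℝ | (∀ i, 0 ≤ x i) ∧ ∑ i, x i = 1}ᶜ = 0 ∧
      ∀ i j, Integrable (fun x => x i * x j) μ ∧ C i j = ∫ x, x i * x j ∂μ) := by
  classical
  set S : Set (Fin n → ℝ) := {x | (∀ i, 0 ≤ x i) ∧ ∑ i, x i = 1} with hS
  have hSclosed : IsClosed S := by
    have : S = (⋂ i, {x : Fin n → ℝ | 0 ≤ x i}) ∩ {x : Fin n → ℝ | ∑ i, x i = 1} := by
      ext x; simp [hS, Set.mem_iInter]
    rw [this]
    exact (isClosed_iInter fun i =>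
        isClosed_le continuous_const (continuous_apply i)).inter
      (isClosed_eq (continuous_finset_sum _ fun i _ => continuous_apply i) continuous_const)
  have hSmeas : MeasurableSet S := hSclosed.measurableSet
  constructor
  · rintro ⟨r, u, hu, hCu⟩
    set s : Fin r → ℝ := fun k => ∑ i, u k i with hs
    set v : Fin r → (Fin n → ℝ) := fun k i => u k i / s k with hv
    have hsnn : ∀ k, 0 ≤ s k := fun k => Finset.sum_nonneg fun i _ => hu k i
    have hzero : ∀ k, s k = 0 → ∀ i, u k i = 0 := by
      intro k hk i
      exact (Finset.sum_eq_zero_iff_of_nonneg fun i _ => hu k i).mp hk i (Finset.mem_univ i)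
    refine ⟨∑ k : Fin r, (ENNReal.ofReal ((s k) ^ 2)) • Measure.dirac (v k), ?_, ?_⟩
    · simp only [Measure.coe_finset_sum, Finset.sum_apply, Measure.smul_apply, smul_eq_mul]
      apply Finset.sum_eq_zero
      intro k _
      by_cases hk : s k = 0
      · simp [hk]
      · have hvk : v k ∈ S := by
          refine ⟨fun i => div_nonneg (hu k i) (hsnn k), ?_⟩
          simp only [hv]
          rw [← Finset.sum_div]
          exact div_self hk
        rw [Measure.dirac_apply' _ hSmeas.compl,
          Set.indicator_of_notMem (by simpa using hvk)]
        simp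
    · intro i j
      have hg : Measurable fun x : Fin n → ℝ => x i * x j :=
        (measurable_pi_apply i).mul (measurable_pi_apply j)
      have hint : ∀ k, Integrable (fun x : Fin n → ℝ => x i * x j)
          ((ENNReal.ofReal ((s k) ^ 2)) • Measure.dirac (v k)) := by
        intro k
        refine Integrable.smul_measure ⟨hg.aestronglyMeasurable, ?_⟩ ENNReal.ofReal_ne_top
        simp only [HasFiniteIntegral, lintegral_dirac]
        exact ENNReal.coe_lt_top
      constructor
      · exact integrable_finset_sum_measure.mpr fun k _ => hint k
      · rw [integral_finset_sum_measure fun k _ => hint k, hCu i j]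
        apply Finset.sum_congr rfl
        intro k _
        rw [integral_smul_measure, integral_dirac, ENNReal.toReal_ofReal (sq_nonneg _)]
        by_cases hk : s k = 0
        · simp [hzero k hk i, hzero k hk j, hk]
        · simp only [hv, smul_eq_mul]
          field_simp
  · rintro ⟨μ, hsupp, hmom⟩
    have haeS : ∀ᵐ x ∂μ, x ∈ S := by
      rw [MeasureTheory.ae_iff]
      exact hsupp
    have hone : Integrable (fun _ : Fin n → ℝ => (1 : ℝ)) μ := by
      have hsum2 : Integrable (fun x : Fin n → ℝ => ∑ i, ∑ j, x i * x j) μ :=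
        integrable_finset_sum _ fun i _ => integrable_finset_sum _ fun j _ => (hmom i j).1
      apply hsum2.congr
      filter_upwards [haeS] with x hx
      rw [← Finset.sum_mul_sum]
      simp [hx.2]
    haveI hfinμ : IsFiniteMeasure μ := by
      constructor
      rcases integrable_const_iff.mp hone with h | h
      · norm_num at h
      · exact h.measure_univ_lt_top
    by_cases hμ0 : μ = 0
    · refine ⟨0, fun _ => 0, fun k i => le_refl 0, fun i j => ?_⟩
      have h2 := (hmom i j).2
      rw [hμ0, integral_zero_measure] at h2
      simp [h2]
    haveI : NeZero μ := ⟨hμ0⟩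
    set f : (Fin n → ℝ) → (Fin n → Fin n → ℝ) := fun x i j => x i * x j with hf
    have hfc : Continuous f :=
      continuous_pi fun i => continuous_pi fun j => (continuous_apply i).mul (continuous_apply j)
    have hfint : Integrable f μ := by
      refine Integrable.mono' (g := fun x => ∑ i, ∑ j, |x i * x j|)
        (integrable_finset_sum _ fun i _ =>
          integrable_finset_sum _ fun j _ => (hmom i j).1.abs)
        hfc.aestronglyMeasurable ?_
      filter_upwards with x
      have hnn : (0 : ℝ) ≤ ∑ i, ∑ j, |x i * x j| :=
        Finset.sum_nonneg fun i _ => Finset.sum_nonneg fun j _ => abs_nonneg _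
      rw [pi_norm_le_iff_of_nonneg hnn]
      intro i
      rw [pi_norm_le_iff_of_nonneg hnn]
      intro j
      calc ‖x i * x j‖ = |x i * x j| := Real.norm_eq_abs _
        _ ≤ ∑ j', |x i * x j'| :=
            Finset.single_le_sum (f := fun j' => |x i * x j'|) (fun j' _ => abs_nonneg _)
              (Finset.mem_univ j)
        _ ≤ ∑ i', ∑ j', |x i' * x j'| :=
            Finset.single_le_sum (f := fun i' => ∑ j', |x i' * x j'|)
              (fun i' _ => Finset.sum_nonneg fun j' _ => abs_nonneg _) (Finset.mem_univ i)
    have hScomp : IsCompact S := by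
      apply (isCompact_closedBall (0 : Fin n → ℝ) 1).of_isClosed_subset hSclosed
      intro x hx
      rw [Metric.mem_closedBall, dist_zero_right, pi_norm_le_iff_of_nonneg zero_le_one]
      intro i
      rw [Real.norm_eq_abs, abs_le]
      refine ⟨le_trans (by norm_num) (hx.1 i), ?_⟩
      calc x i ≤ ∑ i', x i' :=
            Finset.single_le_sum (fun i' _ => hx.1 i') (Finset.mem_univ i)
        _ = 1 := hx.2
    have hHull : IsCompact (convexHull ℝ (f '' S)) :=
      myIsCompact_convexHull (hScomp.image hfc)
    have havg : ⨍ x, f x ∂μ ∈ convexHull ℝ (f '' S) :=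
      Convex.average_mem (convex_convexHull ℝ _) hHull.isClosed
        (haeS.mono fun x hx => subset_convexHull ℝ _ (Set.mem_image_of_mem f hx)) hfint
    set m := (μ Set.univ).toReal with hm
    have hmpos : 0 < m :=
      ENNReal.toReal_pos (Measure.measure_univ_ne_zero.mpr hμ0) (measure_ne_top μ _)
    have hI : ∀ i j, (∫ x, f x ∂μ) i j = C i j := by
      intro i j
      have h := ((ContinuousLinearMap.proj (R := ℝ) (φ := fun _ : Fin n => ℝ) j).comp
        (ContinuousLinearMap.proj (R := ℝ) (φ := fun _ : Fin n => (Fin n → ℝ)) i)).integral_comp_comm hfint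
      simp only [ContinuousLinearMap.comp_apply, ContinuousLinearMap.proj_apply] at h
      rw [(hmom i j).2]
      exact h.symm
    rw [average_eq] at havg
    obtain ⟨ι, hfin', z, w, hrange, hindep, hwpos, hwsum, hrep⟩ :=
      eq_pos_convex_span_of_mem_convexHull havg
    letI := hfin'
    have hz : ∀ i, ∃ p, p ∈ S ∧ f p = z i := fun i => hrange (Set.mem_range_self i)
    choose xp hxpS hxpf using hz
    set e := (Fintype.equivFin ι).symm with he
    refine ⟨Fintype.card ι, fun k a => Real.sqrt (m * w (e k)) * xp (e k) a, ?_, ?_⟩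
    · intro k a
      exact mul_nonneg (Real.sqrt_nonneg _) ((hxpS (e k)).1 a)
    · intro i j
      have key : ∀ i' : ι,
          (Real.sqrt (m * w i') * xp i' i) * (Real.sqrt (m * w i') * xp i' j)
            = m * w i' * z i' i j := by
        intro i'
        have hnn : 0 ≤ m * w i' := mul_nonneg hmpos.le (hwpos i').le
        rw [← hxpf i']
        rw [mul_mul_mul_comm, Real.mul_self_sqrt hnn]
      calc C i j = (∫ x, f x ∂μ) i j := (hI i j).symm
        _ = (m • ((μ Set.univ).toReal⁻¹ • ∫ x, f x ∂μ)) i j := by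
            rw [smul_smul, ← hm, mul_inv_cancel₀ hmpos.ne', one_smul]
        _ = (m • ∑ i', w i' • z i') i j := by rw [← measureReal_def, ← hrep]
        _ = ∑ i', m * w i' * z i' i j := by
            simp only [Pi.smul_apply, Finset.sum_apply, smul_eq_mul, Finset.mul_sum]
            exact Finset.sum_congr rfl fun i' _ => by ring
        _ = ∑ k, m * w (e k) * z (e k) i j := (Equiv.sum_comp e fun i' => m * w i' * z i' i j).symm
        _ = ∑ k, (Real.sqrt (m * w (e k)) * xp (e k) i) * (Real.sqrt (m * w (e k)) * xp (e k) j) :=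
            Finset.sum_congr rfl fun k _ => (key (e k)).symm
end
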